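/- LRW complement bijection (from the proof of Lemma 17 of the paper): Assume the transcript is collision-free. Then the permutation E^{T_j} maps the set V \ {x₁ ⊕ h(τ₁), …, x_j ⊕ h(τ_j)} bijectively onto the set V \ {y₁ ⊕ h(τ₁), …, y_j ⊕ h(τ_j)}; that is, the image of V \ {x₁ ⊕ h(τ₁), …, x_j ⊕ h(τ_j)} under E^{T_j} equals V \ {y₁ ⊕ h(τ₁), …, y_j ⊕ h(τ_j)}. -/

import Mathlib

/-- The reprogrammed permutations `E^{T_i}` of the LRW hybrid argument:
`E^{T_0} = E` and
`E^{T_i} = swap(E^{T_{i-1}}(x_i ⊕ h(τ_i)), y_i ⊕ h(τ_i)) ∘ E^{T_{i-1}}`. -/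
def lrwReprog {V 𝒯 : Type*} [DecidableEq V] [Add V]
    (E : Equiv.Perm V) (h : 𝒯 → V) (τ : ℕ → 𝒯) (x y : ℕ → V) : ℕ → Equiv.Perm V
  | 0 => E
  | i + 1 =>
      Equiv.swap (lrwReprog E h τ x y i (x (i + 1) + h (τ (i + 1))))
          (y (i + 1) + h (τ (i + 1))) *
        lrwReprog E h τ x y i

lemma lrwReprog_maps {V 𝒯 : Type*} [DecidableEq V] [Add V]
    (E : Equiv.Perm V) (h : 𝒯 → V) (τ : ℕ → 𝒯) (x y : ℕ → V) (j : ℕ)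
    (hx : ∀ a b, 1 ≤ a → a ≤ j → 1 ≤ b → b ≤ j → a ≠ b →
      x a + h (τ a) ≠ x b + h (τ b))
    (hy : ∀ a b, 1 ≤ a → a ≤ j → 1 ≤ b → b ≤ j → a ≠ b →
      y a + h (τ a) ≠ y b + h (τ b)) :
    ∀ i, 1 ≤ i → i ≤ j → lrwReprog E h τ x y j (x i + h (τ i)) = y i + h (τ i) := by
  induction j with
  | zero => intro i h1 h2; omega
  | succ j ih =>
    intro i h1 h2
    have hx' : ∀ a b, 1 ≤ a → a ≤ j → 1 ≤ b → b ≤ j → a ≠ b →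
        x a + h (τ a) ≠ x b + h (τ b) := fun a b ha1 ha2 hb1 hb2 hab =>
      hx a b ha1 (by omega) hb1 (by omega) hab
    have hy' : ∀ a b, 1 ≤ a → a ≤ j → 1 ≤ b → b ≤ j → a ≠ b →
        y a + h (τ a) ≠ y b + h (τ b) := fun a b ha1 ha2 hb1 hb2 hab =>
      hy a b ha1 (by omega) hb1 (by omega) hab
    rcases eq_or_lt_of_le h2 with heq | hlt
    · subst heq
      show Equiv.swap _ _ (lrwReprog E h τ x y j (x (j+1) + h (τ (j+1)))) = _
      rw [Equiv.swap_apply_left]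
    · have hij : i ≤ j := by omega
      have key := ih hx' hy' i h1 hij
      show Equiv.swap _ _ (lrwReprog E h τ x y j (x i + h (τ i))) = _
      rw [key]
      rw [Equiv.swap_apply_of_ne_of_ne]
      · intro hc
        exact hx i (j+1) h1 (by omega) (by omega) (by omega) (by omega)
          ((lrwReprog E h τ x y j).injective (by rw [key, hc]))
      · exact hy i (j+1) h1 (by omega) (by omega) (by omega) (by omega)

/-- LRW complement bijection (from the proof of Lemma 17): if the transcript is
collision-free, then `E^{T_j}` maps `V \ {x₁ ⊕ h(τ₁), …, x_j ⊕ h(τ_j)}` bijectively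
onto `V \ {y₁ ⊕ h(τ₁), …, y_j ⊕ h(τ_j)}`. -/
theorem lrw_complement_bijection {n j : ℕ} (hn : 1 ≤ n) {𝒯 : Type*}
    (E : Equiv.Perm (Fin n → ZMod 2)) (h : 𝒯 → Fin n → ZMod 2)
    (τ : ℕ → 𝒯) (x y : ℕ → Fin n → ZMod 2)
    (hx : ∀ a b, 1 ≤ a → a ≤ j → 1 ≤ b → b ≤ j → a ≠ b →
      x a + h (τ a) ≠ x b + h (τ b))
    (hy : ∀ a b, 1 ≤ a → a ≤ j → 1 ≤ b → b ≤ j → a ≠ b →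
      y a + h (τ a) ≠ y b + h (τ b)) :
    (fun z => lrwReprog E h τ x y j z) ''
        (Set.univ \ ((fun i => x i + h (τ i)) '' Set.Icc 1 j)) =
      Set.univ \ ((fun i => y i + h (τ i)) '' Set.Icc 1 j) := by
  set f := lrwReprog E h τ x y j
  have hinj : Function.Injective (fun z => f z) := f.injective
  rw [Set.image_diff hinj, Set.image_univ, Set.range_eq_univ.2 f.surjective,
    Set.image_image]
  congr 1
  exact Set.image_congr fun i hi =>
    lrwReprog_maps E h τ x y j hx hy i hi.1 hi.2
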